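/- For every real number r > 0 and every real number x with 0 < |x| < r, one has 1 ≤ (sinh x)/x ≤ (r²/(r² − x²))^(r²/6). -/

import Mathlib

open Real

lemma fact_aux (k : ℕ) : 6 ^ k * k.factorial ≤ (2 * k + 1).factorial := by
  induction k with
  | zero => simp
  | succ n ih =>
    have h : 2 * (n + 1) + 1 = (2 * n + 1) + 2 := by ring
    rw [h]
    have e1 : ((2 * n + 1) + 2).factorial
        = ((2 * n + 3) * (2 * n + 2)) * (2 * n + 1).factorial := by
      show ((2*n+2)+1).factorial = _
      rw [Nat.factorial_succ, Nat.factorial_succ]; ring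
    rw [e1, pow_succ, Nat.factorial_succ]
    calc 6 ^ n * 6 * ((n + 1) * n.factorial)
        = (6 * (n + 1)) * (6 ^ n * n.factorial) := by ring
      _ ≤ ((2 * n + 3) * (2 * n + 2)) * (2 * n + 1).factorial := by
          apply Nat.mul_le_mul _ ih
          nlinarith
  
lemma sinh_div_le (x : ℝ) (hx : x ≠ 0) : Real.sinh x / x ≤ Real.exp (x ^ 2 / 6) := by
  have h1 : HasSum (fun n : ℕ => x ^ (2 * n) / ((2 * n + 1).factorial : ℝ))
      (Real.sinh x / x) := by
    have := (Real.hasSum_sinh x).div_const x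
    have e : (fun n : ℕ => x ^ (2 * n) / ((2 * n + 1).factorial : ℝ))
        = fun i : ℕ => x ^ (2 * i + 1) / ((2 * i + 1).factorial : ℝ) / x := by
      funext n
      rw [pow_succ, mul_div_right_comm, mul_div_assoc, div_self hx, mul_one]
    rw [e]; exact this
  have h2 : HasSum (fun n : ℕ => (x ^ 2 / 6) ^ n / (n.factorial : ℝ))
      (Real.exp (x ^ 2 / 6)) := by
    have hs := Real.summable_pow_div_factorial (x ^ 2 / 6)
    have := hs.hasSum
    rwa [show ∑' n : ℕ, (x ^ 2 / 6) ^ n / (n.factorial : ℝ) = Real.exp (x ^ 2 / 6) from by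
      rw [Real.exp_eq_exp_ℝ, NormedSpace.exp_eq_tsum_div]] at this
  refine hasSum_le (fun n => ?_) h1 h2
  have hnum : (0:ℝ) ≤ x ^ (2 * n) := by rw [pow_mul]; positivity
  have heq : (x ^ 2 / 6) ^ n = x ^ (2 * n) / 6 ^ n := by
    rw [div_pow, ← pow_mul]
  rw [heq, div_div]
  have hc : (0:ℝ) < 6 ^ n * n.factorial := by
    have := n.factorial_pos
    positivity
  have hle : ((6:ℝ) ^ n * n.factorial) ≤ ((2 * n + 1).factorial : ℝ) := by
    exact_mod_cast fact_aux n
  exact div_le_div_of_nonneg_left hnum hc hle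

theorem stmt_5 (r x : ℝ) (hr : 0 < r) (h0 : 0 < |x|) (h1 : |x| < r) :
    1 ≤ Real.sinh x / x ∧
      Real.sinh x / x ≤ (r ^ 2 / (r ^ 2 - x ^ 2)) ^ (r ^ 2 / 6) := by
  have hx : x ≠ 0 := by simpa [abs_pos] using h0
  have hx2 : x ^ 2 < r ^ 2 := by
    have := sq_abs x
    nlinarith [abs_nonneg x]
  have hb : 0 < r ^ 2 - x ^ 2 := by linarith
  constructor
  · rcases lt_or_gt_of_ne hx with h | h
    · rw [le_div_iff_of_neg h]
      have : -x < sinh (-x) := Real.self_lt_sinh_iff.mpr (by linarith)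
      rw [Real.sinh_neg] at this
      linarith
    · rw [le_div_iff₀ h]
      have := Real.self_lt_sinh_iff.mpr h
      linarith
  · refine le_trans (sinh_div_le x hx) ?_
    have hpos : 0 < r ^ 2 / (r ^ 2 - x ^ 2) := by positivity
    rw [Real.rpow_def_of_pos hpos]
    apply Real.exp_le_exp.mpr
    have hlog : Real.log ((r ^ 2 - x ^ 2) / r ^ 2) ≤ (r ^ 2 - x ^ 2) / r ^ 2 - 1 :=
      Real.log_le_sub_one_of_pos (by positivity)
    have hinv : Real.log ((r ^ 2 - x ^ 2) / r ^ 2) = - Real.log (r ^ 2 / (r ^ 2 - x ^ 2)) := by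
      rw [← Real.log_inv]
      congr 1
      field_simp
    have hsub : (r ^ 2 - x ^ 2) / r ^ 2 - 1 = - (x ^ 2 / r ^ 2) := by
      field_simp
      ring
    rw [hinv, hsub] at hlog
    have hkey : x ^ 2 / r ^ 2 ≤ Real.log (r ^ 2 / (r ^ 2 - x ^ 2)) := by linarith
    have hr2 : (0:ℝ) < r ^ 2 := by positivity
    calc x ^ 2 / 6 = (x ^ 2 / r ^ 2) * (r ^ 2 / 6) := by field_simp
      _ ≤ Real.log (r ^ 2 / (r ^ 2 - x ^ 2)) * (r ^ 2 / 6) :=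
          mul_le_mul_of_nonneg_right hkey (by positivity)
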